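/- Assume the regularity condition holds (there exist an integer M > L−1, nonzero vectors x_1, …, x_M ∈ ℂ^n and positive reals p_1, …, p_M such that q(x_1), …, q(x_M) span ℝ^{L-1} and Σ_{i=1}^M p_i q(x_i) = 0), and assume that Q ∩ 𝒩 = ∅ implies convexHull(Q) ∩ 𝒩 = ∅. Then the S-procedure is lossless: the statement (S1) 'for every x ∈ ℂ^n, if q_l(x) = 0 for all l = 1, …, L−1 then q_0(x) ≥ 0' holds if and only if the statement (S2) 'there exist reals ρ_1, …, ρ_{L-1} such that M_0 + Σ_{l=1}^{L-1} ρ_l M_l is positive semidefinite' holds. (Theorem 1.) -/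

import Mathlib

open Matrix
open scoped ComplexOrder

/-- The real-valued quadratic form `x ↦ xᴴ A x` (real part) associated with a matrix `A`. -/
noncomputable def quadForm {n : ℕ} (A : Matrix (Fin n) (Fin n) ℂ) (x : Fin n → ℂ) : ℝ :=
  (star x ⬝ᵥ (A *ᵥ x)).re

lemma quadForm_add {n : ℕ} (A B : Matrix (Fin n) (Fin n) ℂ) (x : Fin n → ℂ) :
    quadForm (A + B) x = quadForm A x + quadForm B x := by
  simp [quadForm, add_mulVec, dotProduct_add]

lemma quadForm_zero {n : ℕ} (x : Fin n → ℂ) : quadForm (0 : Matrix (Fin n) (Fin n) ℂ) x = 0 := by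
  simp [quadForm]

lemma quadForm_zero_vec {n : ℕ} (A : Matrix (Fin n) (Fin n) ℂ) : quadForm A 0 = 0 := by
  simp [quadForm]

lemma quadForm_real_smul {n : ℕ} (A : Matrix (Fin n) (Fin n) ℂ) (r : ℝ) (x : Fin n → ℂ) :
    quadForm ((r : ℂ) • A) x = r * quadForm A x := by
  simp [quadForm, smul_mulVec]

lemma quadForm_sum {n : ℕ} {ι : Type*} (s : Finset ι) (A : ι → Matrix (Fin n) (Fin n) ℂ)
    (x : Fin n → ℂ) : quadForm (∑ i ∈ s, A i) x = ∑ i ∈ s, quadForm (A i) x := by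
  classical
  induction s using Finset.induction with
  | empty => simp [quadForm_zero]
  | insert _ _ h ih => rw [Finset.sum_insert h, Finset.sum_insert h, quadForm_add, ih]

lemma im_quad_eq_zero {n : ℕ} {A : Matrix (Fin n) (Fin n) ℂ} (hA : A.IsHermitian)
    (x : Fin n → ℂ) : (star x ⬝ᵥ (A *ᵥ x)).im = 0 := by
  have h1 : star (star x ⬝ᵥ (A *ᵥ x)) = star (A *ᵥ x) ⬝ᵥ x := by
    rw [star_dotProduct]; simp
  have h2 : star (A *ᵥ x) ⬝ᵥ x = star x ⬝ᵥ (A *ᵥ x) := by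
    rw [star_mulVec, hA.eq, ← dotProduct_mulVec]
  have h3 : star (star x ⬝ᵥ (A *ᵥ x)) = star x ⬝ᵥ (A *ᵥ x) := h1.trans h2
  have := congrArg Complex.im h3
  simp at this; linarith

lemma quad_nonneg_of_re {n : ℕ} {A : Matrix (Fin n) (Fin n) ℂ} (hA : A.IsHermitian)
    (x : Fin n → ℂ) (h : 0 ≤ quadForm A x) : 0 ≤ star x ⬝ᵥ (A *ᵥ x) := by
  rw [Complex.le_def]
  exact ⟨by simpa [quadForm] using h, by simp [im_quad_eq_zero hA]⟩

lemma sep_lemma {m : ℕ} {D : Set (Fin m → ℝ)} (hD : Convex ℝ D) (hne : D.Nonempty)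
    (h0 : (0 : Fin m → ℝ) ∉ D) :
    ∃ f : (Fin m → ℝ) →L[ℝ] ℝ, f ≠ 0 ∧ ∀ d ∈ D, 0 ≤ f d := by
  by_cases hi : (interior D).Nonempty
  · obtain ⟨y, hy⟩ := hi
    obtain ⟨f, u, hfu, hu⟩ := geometric_hahn_banach_open hD.interior isOpen_interior
      (convex_singleton (0 : Fin m → ℝ))
      (Set.disjoint_singleton_right.2 fun h => h0 (interior_subset h))
    have hu0 : u ≤ 0 := by simpa using hu 0 rfl
    have hf0 : f ≠ 0 := by
      intro h
      have := hfu y hy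
      rw [h] at this
      simp at this
      linarith
    refine ⟨-f, neg_ne_zero.2 hf0, fun d hd => ?_⟩
    have key : f d ≤ u := by
      by_contra hlt
      push_neg at hlt
      set c : ℝ := f d - f y with hc
      set t : ℝ := if c ≤ 0 then (1/2 : ℝ) else min (1/2) ((f d - u)/(2*c)) with ht
      have ht0 : 0 < t := by
        rw [ht]; split_ifs with h
        · norm_num
        · push_neg at h
          exact lt_min (by norm_num) (div_pos (by linarith) (by linarith))
      have ht1 : t ≤ 1/2 := by
        rw [ht]; split_ifs with h
        · exact le_refl _
        · exact min_le_left _ _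
      have hmem : (1 - t) • d + t • y ∈ interior D :=
        hD.combo_self_interior_mem_interior hd hy (by linarith) ht0 (by ring)
      have hval := hfu _ hmem
      rw [_root_.map_add, _root_.map_smul, _root_.map_smul, smul_eq_mul, smul_eq_mul] at hval
      -- hval : (1 - t) * f d + t * f y < u
      have hval' : f d - t * c < u := by rw [hc]; linarith
      rw [ht] at hval'
      split_ifs at hval' with h
      · nlinarith
      · push_neg at h
        have h1 : min (1/2 : ℝ) ((f d - u)/(2*c)) ≤ (f d - u)/(2*c) := min_le_right _ _
        have hc0 : c ≠ 0 := ne_of_gt h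
        have h2 : min (1/2 : ℝ) ((f d - u)/(2*c)) * c ≤ (f d - u)/2 := by
          calc min (1/2 : ℝ) ((f d - u)/(2*c)) * c ≤ ((f d - u)/(2*c)) * c :=
                mul_le_mul_of_nonneg_right h1 (by linarith)
            _ = (f d - u)/2 := by field_simp
        linarith
    simp only [ContinuousLinearMap.neg_apply]
    linarith
  · -- interior empty: D lies in a proper affine subspace
    obtain ⟨d0, hd0⟩ := hne
    have haff : affineSpan ℝ D ≠ ⊤ := by
      intro h
      rw [← hD.interior_nonempty_iff_affineSpan_eq_top] at h
      exact hi h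
    have hdir : (affineSpan ℝ D).direction ≠ ⊤ := by
      intro h
      exact haff ((AffineSubspace.direction_eq_top_iff_of_nonempty
        ⟨d0, subset_affineSpan ℝ D hd0⟩).1 h)
    set V := (affineSpan ℝ D).direction with hV
    obtain ⟨w, hw⟩ : ∃ w, w ∉ V := by
      by_contra h
      push_neg at h
      exact hdir (Submodule.eq_top_iff'.2 h)
    have hmkQ : V.mkQ w ≠ 0 := by
      rw [Submodule.mkQ_apply, Ne, Submodule.Quotient.mk_eq_zero]
      exact hw
    obtain ⟨φ, hφ⟩ : ∃ φ : Module.Dual ℝ ((Fin m → ℝ) ⧸ V), φ (V.mkQ w) ≠ 0 := by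
      by_contra h
      push_neg at h
      exact hmkQ ((Module.forall_dual_apply_eq_zero_iff ℝ _).1 h)
    set f0 : (Fin m → ℝ) →ₗ[ℝ] ℝ := φ.comp V.mkQ with hf0
    set f : (Fin m → ℝ) →L[ℝ] ℝ := LinearMap.toContinuousLinearMap f0 with hf
    have hfw : f w ≠ 0 := hφ
    have hconst : ∀ d ∈ D, f d = f d0 := by
      intro d hd
      have hsub : d - d0 ∈ V :=
        AffineSubspace.vsub_mem_direction (subset_affineSpan ℝ D hd)
          (subset_affineSpan ℝ D hd0)
      have : f (d - d0) = 0 := by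
        show f0 (d - d0) = 0
        rw [hf0, LinearMap.comp_apply]
        rw [show V.mkQ (d - d0) = 0 from (Submodule.Quotient.mk_eq_zero V).2 hsub]
        exact _root_.map_zero φ
      rw [map_sub] at this
      linarith
    rcases le_or_gt 0 (f d0) with h | h
    · exact ⟨f, fun hz => hfw (by rw [hz]; rfl), fun d hd => by rw [hconst d hd]; exact h⟩
    · exact ⟨-f, fun hz => hfw (by
        have : (-f) w = 0 := by rw [hz]; rfl
        simpa using this), fun d hd => by
        simp only [ContinuousLinearMap.neg_apply]
        rw [hconst d hd]; linarith⟩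

/-- Theorem 1: under the regularity condition, and assuming that `Q ∩ 𝒩 = ∅` implies
`convexHull(Q) ∩ 𝒩 = ∅`, the S-procedure is lossless: (S1) holds iff (S2) holds.
Here `L = L' + 1`. -/
theorem stmt3 (n L' : ℕ) (hn : 0 < n) (hL' : 1 ≤ L')
    (M0 : Matrix (Fin n) (Fin n) ℂ) (M : Fin L' → Matrix (Fin n) (Fin n) ℂ)
    (hM0 : M0.IsHermitian) (hM : ∀ l, (M l).IsHermitian)
    (Q : Set (Fin (L' + 1) → ℝ))
    (hQ : Q = {y | ∃ x : Fin n → ℂ,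
      y = Fin.cons (quadForm M0 x) (fun l => quadForm (M l) x)})
    (Nset : Set (Fin (L' + 1) → ℝ))
    (hNset : Nset = {y | y 0 < 0 ∧ ∀ l : Fin L', y l.succ = 0})
    -- regularity condition
    (Mnum : ℕ) (hMnum : L' < Mnum)
    (x : Fin Mnum → Fin n → ℂ) (hx : ∀ i, x i ≠ 0)
    (p : Fin Mnum → ℝ) (hp : ∀ i, 0 < p i)
    (hspan : Submodule.span ℝ
      (Set.range fun i => fun l : Fin L' => quadForm (M l) (x i)) = ⊤)
    (hsum : ∑ i, p i • (fun l : Fin L' => quadForm (M l) (x i)) = 0)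
    -- separation assumption
    (hsep : Q ∩ Nset = ∅ → (convexHull ℝ Q) ∩ Nset = ∅) :
    (∀ ξ : Fin n → ℂ, (∀ l : Fin L', quadForm (M l) ξ = 0) → 0 ≤ quadForm M0 ξ) ↔
      ∃ ρ : Fin L' → ℝ, (M0 + ∑ l, (ρ l : ℂ) • M l).PosSemidef := by
  constructor
  · intro hS1
    have hQmem : ∀ ξ : Fin n → ℂ,
        (Fin.cons (quadForm M0 ξ) (fun l => quadForm (M l) ξ) : Fin (L'+1) → ℝ) ∈ Q := by
      intro ξ; rw [hQ]; exact ⟨ξ, rfl⟩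
    have h0Q : (0 : Fin (L' + 1) → ℝ) ∈ Q := by
      have h := hQmem 0
      have hz : (Fin.cons (quadForm M0 0) (fun l => quadForm (M l) 0) : Fin (L'+1) → ℝ) = 0 := by
        ext i
        refine Fin.cases ?_ ?_ i <;> simp [quadForm_zero_vec]
      rwa [hz] at h
    have hQN : Q ∩ Nset = ∅ := by
      rw [hQ, hNset]
      ext y
      simp only [Set.mem_inter_iff, Set.mem_setOf_eq, Set.mem_empty_iff_false, iff_false]
      rintro ⟨⟨ξ, rfl⟩, hneg, hzero⟩
      have h1 : quadForm M0 ξ < 0 := by simpa using hneg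
      have h2 : ∀ l, quadForm (M l) ξ = 0 := fun l => by simpa using hzero l
      exact absurd (hS1 ξ h2) (not_le.2 h1)
    have hCN := hsep hQN
    set e0 : Fin (L' + 1) → ℝ := Pi.single 0 1 with he0
    set D : Set (Fin (L' + 1) → ℝ) :=
      {y | ∃ c ∈ convexHull ℝ Q, ∃ g : ℝ, 0 < g ∧ y = c + g • e0} with hD
    have hDconv : Convex ℝ D := by
      rintro y1 ⟨c1, hc1, g1, hg1, rfl⟩ y2 ⟨c2, hc2, g2, hg2, rfl⟩ a b ha hb hab
      refine ⟨a • c1 + b • c2, (convex_convexHull ℝ Q) hc1 hc2 ha hb hab,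
        a * g1 + b * g2, ?_, ?_⟩
      · rcases eq_or_lt_of_le ha with h | h
        · have hb1 : b = 1 := by linarith
          rw [← h, hb1]; simpa using hg2
        · have h1 : 0 < a * g1 := mul_pos h hg1
          have h2 : 0 ≤ b * g2 := mul_nonneg hb hg2.le
          linarith
      · module
    have hDne : D.Nonempty :=
      ⟨(0 : Fin (L'+1) → ℝ) + (1:ℝ) • e0, 0, subset_convexHull ℝ Q h0Q, 1, one_pos, rfl⟩
    have h0D : (0 : Fin (L' + 1) → ℝ) ∉ D := by
      rintro ⟨c, hc, g, hg, hcg⟩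
      have hc' : c = (-g) • e0 := by
        have : c + g • e0 - g • e0 = -(g • e0) := by rw [← hcg]; abel
        simpa [neg_smul] using this.symm ▸ (by abel : c + g • e0 - g • e0 = c).symm
      have hcN : c ∈ Nset := by
        rw [hNset]
        constructor
        · rw [hc']
          have : ((-g) • e0) 0 = -g := by simp [he0]
          rw [this]; linarith
        · intro l
          rw [hc']
          have : ((-g) • e0) l.succ = 0 := by
            simp [he0, Pi.single_apply, (Fin.succ_ne_zero l)]
          exact this
      have hmem : c ∈ convexHull ℝ Q ∩ Nset := ⟨hc, hcN⟩
      rw [hCN] at hmem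
      exact hmem
    obtain ⟨f, hfne, hfpos⟩ := sep_lemma hDconv hDne h0D
    have hfe0 : 0 ≤ f e0 := by
      have h1 := hfpos _ ⟨0, subset_convexHull ℝ Q h0Q, 1, one_pos, rfl⟩
      simpa using h1
    have hfC : ∀ c ∈ convexHull ℝ Q, 0 ≤ f c := by
      intro c hc
      by_contra hneg
      push_neg at hneg
      rcases eq_or_lt_of_le hfe0 with h | h
      · have h1 := hfpos _ ⟨c, hc, 1, one_pos, rfl⟩
        rw [_root_.map_add, _root_.map_smul, ← h] at h1
        simp at h1; linarith
      · have hg : 0 < -f c / (2 * f e0) := div_pos (by linarith) (by linarith)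
        have h1 := hfpos _ ⟨c, hc, _, hg, rfl⟩
        rw [_root_.map_add, _root_.map_smul, smul_eq_mul] at h1
        have heq : (-f c / (2 * f e0)) * f e0 = -f c / 2 := by
          field_simp
        rw [heq] at h1
        linarith
    set τ : Fin (L' + 1) → ℝ := fun i => f (Pi.single i 1) with hτ
    have hfdecomp : ∀ y : Fin (L' + 1) → ℝ, f y = ∑ i, y i * τ i := by
      intro y
      have hy : y = ∑ i : Fin (L'+1), y i • (Pi.single i 1 : Fin (L'+1) → ℝ) := by
        ext j
        simp [Finset.sum_apply, Pi.single_apply]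
      conv_lhs => rw [hy]
      rw [_root_.map_sum]
      simp [hτ]
    have hkey : ∀ ξ : Fin n → ℂ,
        0 ≤ quadForm M0 ξ * τ 0 + ∑ l, quadForm (M l) ξ * τ l.succ := by
      intro ξ
      have h1 := hfC _ (subset_convexHull ℝ Q (hQmem ξ))
      rw [hfdecomp] at h1
      rw [Fin.sum_univ_succ] at h1
      simpa using h1
    have hτ0 : 0 ≤ τ 0 := hfe0
    have hτ0pos : 0 < τ 0 := by
      rcases eq_or_lt_of_le hτ0 with h | h
      · exfalso
        have hkey' : ∀ ξ : Fin n → ℂ, 0 ≤ ∑ l, quadForm (M l) ξ * τ l.succ := by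
          intro ξ
          have h1 := hkey ξ
          rw [← h] at h1
          simpa using h1
        set G : (Fin L' → ℝ) →ₗ[ℝ] ℝ := ∑ l, τ l.succ • LinearMap.proj l with hG
        have hGapply : ∀ v : Fin L' → ℝ, G v = ∑ l, v l * τ l.succ := by
          intro v
          rw [hG]
          simp [LinearMap.sum_apply, mul_comm]
        have hGx : ∀ i, G (fun l => quadForm (M l) (x i)) = 0 := by
          have hsum' := congrArg G hsum
          rw [_root_.map_sum, _root_.map_zero] at hsum'
          simp only [_root_.map_smul] at hsum'
          have hterm : ∀ i ∈ Finset.univ,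
              (0:ℝ) ≤ p i • G (fun l => quadForm (M l) (x i)) := by
            intro i _
            rw [smul_eq_mul]
            apply mul_nonneg (hp i).le
            rw [hGapply]
            exact hkey' (x i)
          have hz := (Finset.sum_eq_zero_iff_of_nonneg hterm).1 hsum'
          intro i
          have hi := hz i (Finset.mem_univ i)
          rw [smul_eq_mul] at hi
          rcases mul_eq_zero.1 hi with h' | h'
          · exact absurd h' (hp i).ne'
          · exact h'
        have hGzero : G = 0 := by
          have hker : Submodule.span ℝ
              (Set.range fun i => fun l : Fin L' => quadForm (M l) (x i)) ≤ LinearMap.ker G := by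
            rw [Submodule.span_le]
            rintro _ ⟨i, rfl⟩
            exact hGx i
          rw [hspan] at hker
          ext v
          exact hker Submodule.mem_top
        have hτsucc : ∀ l : Fin L', τ l.succ = 0 := by
          intro l
          have h1 : G (Pi.single l 1) = 0 := by rw [hGzero]; rfl
          rw [hGapply] at h1
          simpa [Pi.single_apply] using h1
        apply hfne
        ext y
        rw [hfdecomp y]
        simp only [ContinuousLinearMap.zero_apply]
        apply Finset.sum_eq_zero
        intro i _
        refine Fin.cases ?_ ?_ i
        · rw [← h]; ring
        · intro l; rw [hτsucc l]; ring
      · exact h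
    refine ⟨fun l => τ l.succ / τ 0, posSemidef_iff_dotProduct_mulVec.2 ⟨?_, ?_⟩⟩
    · show (M0 + ∑ l, ((τ l.succ / τ 0 : ℝ) : ℂ) • M l)ᴴ = _
      have hMeq : ∀ l, (M l)ᴴ = M l := fun l => (hM l).eq
      simp [conjTranspose_add, conjTranspose_sum, conjTranspose_smul, Complex.star_def,
        Complex.conj_ofReal, hM0.eq, hMeq]
    · intro v
      have hherm : (M0 + ∑ l, ((τ l.succ / τ 0 : ℝ) : ℂ) • M l).IsHermitian := by
        show (M0 + ∑ l, ((τ l.succ / τ 0 : ℝ) : ℂ) • M l)ᴴ = _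
        have hMeq : ∀ l, (M l)ᴴ = M l := fun l => (hM l).eq
        simp [conjTranspose_add, conjTranspose_sum, conjTranspose_smul, Complex.star_def,
          Complex.conj_ofReal, hM0.eq, hMeq]
      apply quad_nonneg_of_re hherm
      rw [show quadForm (M0 + ∑ l, ((τ l.succ / τ 0 : ℝ) : ℂ) • M l) v
          = quadForm M0 v + ∑ l, (τ l.succ / τ 0) * quadForm (M l) v by
        rw [quadForm_add, quadForm_sum]
        congr 1
        exact Finset.sum_congr rfl fun l _ => quadForm_real_smul _ _ _]
      have h1 := hkey v
      have h2 : 0 ≤ (quadForm M0 v * τ 0 + ∑ l, quadForm (M l) v * τ l.succ) / τ 0 :=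
        div_nonneg h1 hτ0pos.le
      have h3 : quadForm M0 v + ∑ l, (τ l.succ / τ 0) * quadForm (M l) v
          = (quadForm M0 v * τ 0 + ∑ l, quadForm (M l) v * τ l.succ) / τ 0 := by
        rw [add_div, Finset.sum_div, mul_div_cancel_right₀ _ hτ0pos.ne']
        congr 1
        exact Finset.sum_congr rfl fun l _ => by ring
      rw [h3]
      exact h2
  · rintro ⟨ρ, hPSD⟩ ξ hzero
    have h := hPSD.dotProduct_mulVec_nonneg ξ
    rw [Complex.le_def] at h
    have hre : (0:ℝ) ≤ (star ξ ⬝ᵥ ((M0 + ∑ l, (ρ l : ℂ) • M l) *ᵥ ξ)).re := by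
      simpa using h.1
    have hexp : (star ξ ⬝ᵥ ((M0 + ∑ l, (ρ l : ℂ) • M l) *ᵥ ξ)).re
        = quadForm M0 ξ + ∑ l, ρ l * quadForm (M l) ξ := by
      show quadForm _ ξ = _
      rw [quadForm_add, quadForm_sum]
      congr 1
      exact Finset.sum_congr rfl fun l _ => quadForm_real_smul _ _ _
    rw [hexp] at hre
    have : ∑ l, ρ l * quadForm (M l) ξ = 0 :=
      Finset.sum_eq_zero fun l _ => by rw [hzero l, mul_zero]
    linarith
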